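/- arXiv:1307.4277 — 2 statements merged into one kernel-verified Lean document; each statement's English description precedes it below -/
import Mathlib

section
/- Let d : ℝ → ℝ be an additive function such that the mapping φ defined on (0, ∞) by φ(x) = d(ln(x)) − (1/x)·d(x) is regular on (0, ∞) (i.e., locally bounded, or continuous, or Lebesgue measurable). Then there exists a real derivation χ : ℝ → ℝ such that d(x) = χ(x) + d(1)·x for all x ∈ ℝ. -/
open Real Set MeasureTheory Filter

/-- A function `φ` is locally bounded on a set `s` if every point of `s` has a
neighborhood (within `s`) on which `φ` is bounded. -/
def LocallyBoundedOn (φ : ℝ → ℝ) (s : Set ℝ) : Prop :=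
  ∀ x ∈ s, ∃ C : ℝ, ∀ᶠ y in nhdsWithin x s, |φ y| ≤ C

/-- A real-valued function is *regular* on its domain `s` if it is locally bounded,
or continuous, or Lebesgue measurable on `s`. -/
def RegularOn (φ : ℝ → ℝ) (s : Set ℝ) : Prop :=
  LocallyBoundedOn φ s ∨ ContinuousOn φ s ∨ Measurable (s.restrict φ)

/-- A real derivation: an additive function satisfying the Leibniz rule. -/
def IsRealDerivation (χ : ℝ → ℝ) : Prop :=
  (∀ x y : ℝ, χ (x + y) = χ x + χ y) ∧ (∀ x y : ℝ, χ (x * y) = x * χ y + y * χ x)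

/-- Additive maps on ℝ are ℚ-homogeneous. -/
lemma additive_rat_smul (f : ℝ → ℝ) (hf : ∀ x y, f (x + y) = f x + f y)
    (q : ℚ) (x : ℝ) : f ((q : ℝ) * x) = (q : ℝ) * f x := by
  have := map_ratCast_smul (AddMonoidHom.mk' f hf) ℝ ℝ q x
  simpa [smul_eq_mul] using this

/-- An additive function bounded on some nondegenerate interval is linear. -/
lemma additive_linear_of_bounded (g : ℝ → ℝ) (hg : ∀ x y, g (x + y) = g x + g y)
    (x₀ δ C : ℝ) (hδ : 0 < δ) (hb : ∀ y : ℝ, |y - x₀| < δ → |g y| ≤ C) :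
    ∀ x, g x = g 1 * x := by
  set h : ℝ → ℝ := fun x => g x - g 1 * x with hh
  have hadd : ∀ x y, h (x + y) = h x + h y := by
    intro x y; simp only [hh, hg]; ring
  have hq0 : ∀ q : ℚ, h ((q : ℝ)) = 0 := by
    intro q
    have := additive_rat_smul g hg q 1
    rw [mul_one] at this
    simp only [hh, this]
    ring
  set C' : ℝ := C + |g 1| * (|x₀| + δ) with hC'
  have hbh : ∀ y : ℝ, |y - x₀| < δ → |h y| ≤ C' := by
    intro y hy
    have h1 : |y| ≤ |x₀| + δ := by
      have := abs_sub_abs_le_abs_sub y x₀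
      linarith
    have h2 : |g 1 * y| ≤ |g 1| * (|x₀| + δ) := by
      rw [abs_mul]
      exact mul_le_mul_of_nonneg_left h1 (abs_nonneg _)
    calc |h y| = |g y - g 1 * y| := rfl
      _ ≤ |g y| + |g 1 * y| := abs_sub _ _
      _ ≤ C + |g 1| * (|x₀| + δ) := add_le_add (hb y hy) h2
  have hglobal : ∀ x : ℝ, |h x| ≤ C' := by
    intro x
    obtain ⟨q, hq1, hq2⟩ := exists_rat_btwn (show x - x₀ - δ < x - x₀ + δ by linarith)
    have hxq : |x - (q : ℝ) - x₀| < δ := by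
      rw [abs_lt]; constructor <;> linarith
    have hx : h x = h (x - (q : ℝ)) := by
      have := hadd (x - (q : ℝ)) ((q : ℝ))
      rw [sub_add_cancel, hq0 q] at this
      linarith
    rw [hx]
    exact hbh _ hxq
  intro x
  have hx0 : h x = 0 := by
    by_contra hx
    have hpos : 0 < |h x| := abs_pos.mpr hx
    obtain ⟨n, hn⟩ := exists_nat_gt (C' / |h x|)
    have hscale : h ((n : ℝ) * x) = (n : ℝ) * h x := by
      have := additive_rat_smul h hadd (n : ℚ) x
      push_cast at this
      exact this
    have h1 : |h ((n : ℝ) * x)| ≤ C' := hglobal _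
    rw [hscale, abs_mul, Nat.abs_cast] at h1
    have h2 : C' < (n : ℝ) * |h x| := (div_lt_iff₀ hpos).mp hn
    linarith
  simp only [hh] at hx0
  linarith

/-- Continuity on a set implies local boundedness on the set. -/
lemma locallyBoundedOn_of_continuousOn (φ : ℝ → ℝ) (s : Set ℝ)
    (hc : ContinuousOn φ s) : LocallyBoundedOn φ s := by
  intro x hx
  refine ⟨|φ x| + 1, ?_⟩
  have h1 : ∀ᶠ z in nhds (φ x), |z| ≤ |φ x| + 1 := by
    filter_upwards [Metric.ball_mem_nhds (φ x) one_pos] with z hz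
    rw [Metric.mem_ball, Real.dist_eq] at hz
    have : |z| ≤ |z - φ x| + |φ x| := by
      simpa using abs_add_le (z - φ x) (φ x)
    linarith
  exact Filter.Tendsto.eventually (hc x hx) h1

/-- An additive function agreeing with a measurable function on `(1,2)` is linear. -/
lemma additive_linear_of_measurable (g : ℝ → ℝ) (hg : ∀ x y, g (x + y) = g x + g y)
    (m : ℝ → ℝ) (hm : Measurable m) (hgm : ∀ x ∈ Ioo (1:ℝ) 2, g x = m x) :
    ∀ x, g x = g 1 * x := by
  set S : ℕ → Set ℝ := fun n => Ioo (1:ℝ) 2 ∩ {x | |m x| ≤ (n : ℝ)} with hS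
  have hSmeas : ∀ n, MeasurableSet (S n) :=
    fun n => measurableSet_Ioo.inter (measurableSet_le hm.abs measurable_const)
  have hSmono : Monotone S := by
    intro a b hab x hx
    refine ⟨hx.1, ?_⟩
    have h2 : |m x| ≤ (a : ℝ) := hx.2
    exact le_trans h2 (Nat.cast_le.mpr hab)
  have hSunion : (⋃ n, S n) = Ioo (1:ℝ) 2 := by
    ext x
    simp only [mem_iUnion, hS, mem_inter_iff, mem_setOf_eq]
    constructor
    · rintro ⟨n, hn, _⟩; exact hn
    · intro hx
      obtain ⟨n, hn⟩ := exists_nat_ge |m x|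
      exact ⟨n, hx, hn⟩
  have hvol : volume (⋃ n, S n) = ENNReal.ofReal 1 := by
    rw [hSunion, Real.volume_Ioo]
    norm_num
  have hdir : Directed (· ⊆ ·) S := hSmono.directed_le
  have hsup : (⨆ n, volume (S n)) = ENNReal.ofReal 1 := by
    rw [← hdir.measure_iUnion, hvol]
  obtain ⟨N, hN⟩ : ∃ N, ENNReal.ofReal (7/8) < volume (S N) := by
    rw [← lt_iSup_iff, hsup]
    exact ENNReal.ofReal_lt_ofReal_iff_of_nonneg (by norm_num) |>.mpr (by norm_num)
  -- boundedness of g near 0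
  have hbound : ∀ t : ℝ, |t - 0| < 1/8 → |g t| ≤ 2 * (N : ℝ) := by
    intro t ht
    rw [sub_zero, abs_lt] at ht
    set A := S N with hA
    set B := (fun x : ℝ => x + t) ⁻¹' A with hB
    have hBmeas : MeasurableSet B := (measurable_add_const t) (hSmeas N)
    have hvolB : volume B = volume A := measure_preimage_add_right volume t A
    have hsub : A ∪ B ⊆ Ioo (7/8 : ℝ) (17/8) := by
      rintro x (hx | hx)
      · have h1 : (1:ℝ) < x := hx.1.1
        have h2 : x < 2 := hx.1.2
        exact ⟨by linarith [ht.1, ht.2], by linarith [ht.1, ht.2]⟩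
      · have h1 : (1:ℝ) < x + t := hx.1.1
        have h2 : x + t < 2 := hx.1.2
        exact ⟨by linarith [ht.1, ht.2], by linarith [ht.1, ht.2]⟩
    have hUB : volume (A ∪ B) ≤ ENNReal.ofReal (5/4) := by
      calc volume (A ∪ B) ≤ volume (Ioo (7/8 : ℝ) (17/8)) := measure_mono hsub
        _ = ENNReal.ofReal (5/4) := by rw [Real.volume_Ioo]; norm_num
    have hinter : (A ∩ B).Nonempty := by
      by_contra hne
      rw [not_nonempty_iff_eq_empty] at hne
      have heq := measure_union_add_inter A hBmeas (μ := volume)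
      rw [hne, measure_empty, add_zero] at heq
      have hlb : ENNReal.ofReal (7/8) + ENNReal.ofReal (7/8) < volume A + volume B := by
        rw [hvolB]
        exact ENNReal.add_lt_add hN hN
      rw [← heq] at hlb
      have : ENNReal.ofReal (7/8) + ENNReal.ofReal (7/8) = ENNReal.ofReal (7/4) := by
        rw [← ENNReal.ofReal_add (by norm_num) (by norm_num)]
        norm_num
      rw [this] at hlb
      have h54 : ENNReal.ofReal (7/4) ≤ ENNReal.ofReal (5/4) := le_trans hlb.le hUB
      rw [ENNReal.ofReal_le_ofReal_iff (by norm_num)] at h54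
      linarith
    obtain ⟨s, hsA, hsB⟩ := hinter
    have hs1 : s ∈ Ioo (1:ℝ) 2 := hsA.1
    have hs2 : |m s| ≤ (N : ℝ) := hsA.2
    have hst1 : s + t ∈ Ioo (1:ℝ) 2 := hsB.1
    have hst2 : |m (s + t)| ≤ (N : ℝ) := hsB.2
    have hgt : g t = m (s + t) - m s := by
      have := hg s t
      rw [hgm s hs1, hgm (s + t) hst1] at this
      linarith
    rw [hgt]
    calc |m (s + t) - m s| ≤ |m (s + t)| + |m s| := abs_sub _ _
      _ ≤ 2 * (N : ℝ) := by linarith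
  exact additive_linear_of_bounded g hg 0 (1/8) (2 * (N : ℝ)) (by norm_num) hbound

theorem stmt_7 (d : ℝ → ℝ)
    (hd : ∀ x y : ℝ, d (x + y) = d x + d y)
    (hreg : RegularOn (fun x : ℝ => d (Real.log x) - (1 / x) * d x) (Set.Ioi 0)) :
    ∃ χ : ℝ → ℝ, IsRealDerivation χ ∧ ∀ x : ℝ, d x = χ x + d 1 * x := by
  have hd0 : d 0 = 0 := by
    have := hd 0 0
    simp only [add_zero] at this
    linarith
  set φ : ℝ → ℝ := fun x : ℝ => d (Real.log x) - (1 / x) * d x with hφ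
  set c : ℝ := d 1 with hc
  set E : ℝ → ℝ → ℝ := fun x y => d (x * y) - x * d y - y * d x + x * y * c with hE
  have hEadd : ∀ y x x', E (x + x') y = E x y + E x' y := by
    intro y x x'
    simp only [hE]
    rw [add_mul, hd, hd]
    ring
  have hE1 : ∀ y, E 1 y = 0 := by intro y; simp only [hE, hc]; ring_nf
  have hE0 : ∀ y, E 0 y = 0 := by
    intro y; simp only [hE, zero_mul, mul_zero, hd0]; ring
  have hEy0 : ∀ x, E x 0 = 0 := by
    intro x; simp only [hE, mul_zero, zero_mul, hd0]; ring
  have hEsymm : ∀ x y, E x y = E y x := by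
    intro x y
    simp only [hE]
    rw [mul_comm x y]
    ring
  have hEphi : ∀ x : ℝ, 0 < x → ∀ y : ℝ, 0 < y →
      E x y = x * y * (φ x + φ y + c - φ (x * y)) := by
    intro x hx y hy
    simp only [hφ, hE]
    rw [Real.log_mul (ne_of_gt hx) (ne_of_gt hy), hd]
    field_simp
    ring
  -- the locally bounded case
  have main_lb : LocallyBoundedOn φ (Ioi 0) → ∀ y : ℝ, 0 < y → ∀ x, E x y = 0 := by
    intro hlb y hy
    obtain ⟨C₁, hev₁⟩ := hlb 1 (by norm_num)
    obtain ⟨C₂, hev₂⟩ := hlb y hy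
    rw [eventually_nhdsWithin_iff, Metric.eventually_nhds_iff] at hev₁ hev₂
    obtain ⟨δ₁, hδ₁, h1⟩ := hev₁
    obtain ⟨δ₂, hδ₂, h2⟩ := hev₂
    set δ : ℝ := min (min δ₁ (1/2)) (δ₂ / (y + 1)) with hδdef
    have hδpos : 0 < δ := by
      apply lt_min (lt_min hδ₁ (by norm_num))
      positivity
    set C : ℝ := (3/2) * y * (C₁ + |φ y| + |c| + C₂) with hCdef
    have hb : ∀ x : ℝ, |x - 1| < δ → |E x y| ≤ C := by
      intro x hx
      have hx1 : |x - 1| < δ₁ := lt_of_lt_of_le hx (le_trans (min_le_left _ _) (min_le_left _ _))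
      have hxhalf : |x - 1| < 1/2 :=
        lt_of_lt_of_le hx (le_trans (min_le_left _ _) (min_le_right _ _))
      have hx2 : |x - 1| < δ₂ / (y + 1) := lt_of_lt_of_le hx (min_le_right _ _)
      rw [abs_lt] at hxhalf
      have hxpos : 0 < x := by linarith
      have hxle : x ≤ 3/2 := by linarith
      have hφx : |φ x| ≤ C₁ := h1 (by rw [Real.dist_eq]; exact hx1) (mem_Ioi.mpr hxpos)
      have hxy : |x * y - y| < δ₂ := by
        have heq : x * y - y = (x - 1) * y := by ring
        rw [heq, abs_mul, abs_of_pos hy]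
        calc |x - 1| * y < (δ₂ / (y + 1)) * y := by
              apply mul_lt_mul_of_pos_right hx2 hy
          _ ≤ δ₂ := by
              rw [div_mul_eq_mul_div, div_le_iff₀ (by linarith)]
              nlinarith
      have hφxy : |φ (x * y)| ≤ C₂ := by
        apply h2 (by rw [Real.dist_eq]; exact hxy) (mem_Ioi.mpr (by positivity))
      rw [hEphi x hxpos y hy]
      rw [abs_mul]
      have habs : |φ x + φ y + c - φ (x * y)| ≤ C₁ + |φ y| + |c| + C₂ := by
        have := abs_add_le (φ x + φ y) c
        have t1 : |φ x + φ y + c - φ (x * y)| ≤ |φ x| + |φ y| + |c| + |φ (x * y)| := by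
          calc |φ x + φ y + c - φ (x * y)| ≤ |φ x + φ y + c| + |φ (x * y)| := abs_sub _ _
            _ ≤ |φ x + φ y| + |c| + |φ (x * y)| := by
                have := abs_add_le (φ x + φ y) c; linarith
            _ ≤ |φ x| + |φ y| + |c| + |φ (x * y)| := by
                have := abs_add_le (φ x) (φ y); linarith
        linarith
      have hxyabs : |x * y| ≤ (3/2) * y := by
        rw [abs_of_pos (by positivity)]
        nlinarith
      calc |x * y| * |φ x + φ y + c - φ (x * y)| ≤ ((3/2) * y) * (C₁ + |φ y| + |c| + C₂) := by
            apply mul_le_mul hxyabs habs (abs_nonneg _)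
            positivity
        _ = C := rfl
    intro x
    have := additive_linear_of_bounded (fun x => E x y) (fun a b => hEadd y a b)
      1 δ C hδpos hb x
    rw [hE1 y] at this
    simpa using this
  -- the measurable case
  have main_meas : Measurable ((Ioi (0:ℝ)).restrict φ) → ∀ y : ℝ, 0 < y → ∀ x, E x y = 0 := by
    intro hmeas y hy
    set φ' : ℝ → ℝ := Function.extend Subtype.val ((Ioi (0:ℝ)).restrict φ) (fun _ => 0)
      with hφ'
    have hφ'meas : Measurable φ' :=
      (MeasurableEmbedding.subtype_coe measurableSet_Ioi).measurable_extend hmeas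
        measurable_const
    have hφ'eq : ∀ x : ℝ, 0 < x → φ' x = φ x := by
      intro x hx
      have hxmem : x ∈ Ioi (0:ℝ) := mem_Ioi.mpr hx
      have : φ' ((⟨x, hxmem⟩ : Ioi (0:ℝ)) : ℝ) = φ x := by
        rw [hφ', Subtype.val_injective.extend_apply]
        rfl
      simpa using this
    set m : ℝ → ℝ := fun x => x * y * (φ' x + φ' y + c - φ' (x * y)) with hm
    have hmmeas : Measurable m := by
      apply Measurable.mul (measurable_id.mul_const y)
      apply Measurable.sub
      · exact (hφ'meas.add_const (φ' y)).add_const c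
      · exact hφ'meas.comp (measurable_id.mul_const y)
    have hagree : ∀ x ∈ Ioo (1:ℝ) 2, E x y = m x := by
      intro x hx
      have hxpos : 0 < x := by linarith [hx.1]
      rw [hEphi x hxpos y hy]
      simp only [hm]
      rw [hφ'eq x hxpos, hφ'eq y hy, hφ'eq (x * y) (by positivity)]
    intro x
    have := additive_linear_of_measurable (fun x => E x y) (fun a b => hEadd y a b)
      m hmmeas hagree x
    rw [hE1 y] at this
    simpa using this
  -- combine the three regularity cases
  have key : ∀ y : ℝ, 0 < y → ∀ x, E x y = 0 := by
    rcases (hreg : LocallyBoundedOn φ (Ioi 0) ∨ ContinuousOn φ (Ioi 0) ∨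
        Measurable ((Ioi (0:ℝ)).restrict φ)) with hlb | hcont | hmeas
    · exact main_lb hlb
    · exact main_lb (locallyBoundedOn_of_continuousOn φ _ hcont)
    · exact main_meas hmeas
  -- extend to all reals
  have hEall : ∀ x y : ℝ, E x y = 0 := by
    intro x y
    rcases lt_trichotomy y 0 with hy | hy | hy
    · have hsum : E y x + E (-y) x = E 0 x := by
        have := hEadd x y (-y)
        rw [add_neg_cancel] at this
        linarith
      rw [hE0] at hsum
      have hneg : E (-y) x = 0 := by
        rw [hEsymm]
        exact key (-y) (by linarith) x
      rw [hEsymm x y]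
      linarith
    · rw [hy]; exact hEy0 x
    · exact key y hy x
  refine ⟨fun x => d x - d 1 * x, ⟨?_, ?_⟩, ?_⟩
  · intro x y
    simp only [hd]
    ring
  · intro x y
    have h := hEall x y
    simp only [hE, ← hc] at h
    simp only [← hc]
    linear_combination h
  · intro x
    ring
end

section
/- Let d : ℝ → ℝ be an additive function such that the mapping φ defined on (−1, 1) by φ(x) = d(arccos(x)) + (1/√(1 − x²))·d(x) is regular on (−1, 1) (i.e., locally bounded, or continuous, or Lebesgue measurable). Then there exists a real derivation χ : ℝ → ℝ such that d(x) = χ(x) + d(1)·x for all x ∈ ℝ. -/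
open Real Set

open Pointwise

section CoreLemmas
variable {a : ℝ → ℝ}

lemma add_zero' (ha : ∀ x y, a (x + y) = a x + a y) : a 0 = 0 := by
  have := ha 0 0; simp at this; linarith

lemma add_smul_nat (ha : ∀ x y, a (x + y) = a x + a y) (n : ℕ) (x : ℝ) :
    a ((n+1) * x) = (n+1) * a x := by
  induction n with
  | zero => simp
  | succ n ih =>
    have h1 : ((n:ℝ)+1+1) * x = ((n:ℝ)+1)*x + x := by ring
    push_cast
    rw [h1, ha, ih]
    ring

lemma add_rat (ha : ∀ x y, a (x + y) = a x + a y) (q : ℚ) (x : ℝ) :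
    a ((q:ℝ) * x) = (q:ℝ) * a x := by
  have := map_ratCast_smul (AddMonoidHom.mk' a ha) ℝ ℝ q x
  simpa [smul_eq_mul] using this

/-- Cauchy: additive and bounded near 0 implies linear. -/
lemma additive_linear_of_bounded_near_zero (ha : ∀ x y, a (x + y) = a x + a y)
    {δ M : ℝ} (hδ : 0 < δ) (hM : ∀ x, |x| < δ → |a x| ≤ M) :
    ∀ x, a x = a 1 * x := by
  set b : ℝ → ℝ := fun x => a x - a 1 * x with hb
  have hbadd : ∀ x y, b (x + y) = b x + b y := by
    intro x y; simp only [hb, ha]; ring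
  have hbq : ∀ q : ℚ, b (q:ℝ) = 0 := by
    intro q
    have := add_rat ha q 1
    simp only [mul_one] at this
    simp [hb, this]; ring
  have hbdd : ∀ x, |b x| ≤ M + |a 1| * δ := by
    intro x
    obtain ⟨q, hq⟩ := exists_rat_near x hδ
    have h1 : b x = b (x - q) := by
      have := hbadd (x - q) q
      rw [sub_add_cancel] at this
      rw [this, hbq]; ring
    have h2 : |a (x - q)| ≤ M := hM _ hq
    have h3 : |b (x - q)| ≤ |a (x-q)| + |a 1| * |x - (q:ℝ)| := by
      simp only [hb]
      calc |a (x-q) - a 1 * (x - q)| ≤ |a (x-q)| + |a 1 * (x-q)| := abs_sub _ _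
        _ = |a (x-q)| + |a 1| * |x - (q:ℝ)| := by rw [abs_mul]
    rw [h1]
    have : |a 1| * |x - (q:ℝ)| ≤ |a 1| * δ :=
      mul_le_mul_of_nonneg_left hq.le (abs_nonneg _)
    linarith
  intro x
  have hzero : b x = 0 := by
    by_contra hne
    have hpos : 0 < |b x| := abs_pos.2 hne
    set K := M + |a 1| * δ with hK
    obtain ⟨n, hn⟩ := exists_nat_gt (K / |b x|)
    have hbn : b ((n+1) * x) = (n+1) * b x := by
      exact add_smul_nat hbadd n x
    have := hbdd ((n+1) * x)
    rw [hbn, abs_mul] at this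
    have hn1 : ((n:ℝ)+1) > K / |b x| := by
      push_cast; linarith
    have habs : |(n:ℝ)+1| = (n:ℝ)+1 := abs_of_pos (by positivity)
    rw [habs] at this
    have : K / |b x| * |b x| < ((n:ℝ)+1) * |b x| := by
      apply mul_lt_mul_of_pos_right hn1 hpos
    rw [div_mul_cancel₀ _ (ne_of_gt hpos)] at this
    linarith
  have : a x - a 1 * x = 0 := hzero
  linarith

end CoreLemmas

section Interval
variable {a : ℝ → ℝ}

lemma additive_linear_of_bounded_on_Ioo (ha : ∀ x y, a (x + y) = a x + a y)
    {α β M : ℝ} (hαβ : α < β) (hM : ∀ x ∈ Ioo α β, |a x| ≤ M) :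
    ∀ x, a x = a 1 * x := by
  apply additive_linear_of_bounded_near_zero ha (δ := β - α) (M := 2*M) (by linarith)
  intro x hx
  rw [abs_lt] at hx
  have h1 : (α + β + x)/2 ∈ Ioo α β := by constructor <;> [linarith; linarith]
  have h2 : (α + β - x)/2 ∈ Ioo α β := by constructor <;> [linarith; linarith]
  have hax : a x = a ((α+β+x)/2) - a ((α+β-x)/2) := by
    have := ha ((α+β-x)/2) x
    have he : (α+β-x)/2 + x = (α+β+x)/2 := by ring
    rw [he] at this
    linarith
  rw [hax]
  have b1 := hM _ h1
  have b2 := hM _ h2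
  calc |a ((α+β+x)/2) - a ((α+β-x)/2)| ≤ |a ((α+β+x)/2)| + |a ((α+β-x)/2)| := abs_sub _ _
    _ ≤ 2*M := by linarith

lemma additive_zero_of_zero_on_Ioo (ha : ∀ x y, a (x + y) = a x + a y)
    {α β : ℝ} (hαβ : α < β) (h0 : ∀ x ∈ Ioo α β, a x = 0) :
    ∀ x, a x = 0 := by
  have hlin : ∀ x, a x = a 1 * x := by
    apply additive_linear_of_bounded_on_Ioo ha hαβ (M := 0)
    intro x hx; rw [h0 x hx]; simp
  -- find a nonzero element of Ioo α β
  have hne : ∃ y ∈ Ioo α β, y ≠ 0 := by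
    by_cases h : (α+β)/2 = 0
    · refine ⟨(α + (α+β)/2)/2, ⟨by linarith, by linarith⟩, ?_⟩
      rw [h]; simp; linarith
    · exact ⟨(α+β)/2, ⟨by linarith, by linarith⟩, h⟩
  obtain ⟨y, hy, hy0⟩ := hne
  have : a 1 * y = 0 := by rw [← hlin y]; exact h0 y hy
  have ha1 : a 1 = 0 := by
    rcases mul_eq_zero.1 this with h | h
    · exact h
    · exact absurd h hy0
  intro x; rw [hlin x, ha1, zero_mul]

/-- additive, measurable on a nondegenerate interval, implies linear. -/
lemma additive_linear_of_measurable_on_Ioo (ha : ∀ x y, a (x + y) = a x + a y)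
    {α β : ℝ} (hαβ : α < β) (hmeas : Measurable ((Ioo α β).restrict a)) :
    ∀ x, a x = a 1 * x := by
  -- sets where |a| ≤ N
  set T : ℕ → Set ℝ := fun N => Subtype.val '' ((Ioo α β).restrict a ⁻¹' Icc (-(N:ℝ)) N) with hT
  have hTmeas : ∀ N, MeasurableSet (T N) := fun N =>
    (measurableSet_Ioo).subtype_image (hmeas measurableSet_Icc)
  have hTunion : Ioo α β ⊆ ⋃ N, T N := by
    intro x hx
    obtain ⟨N, hN⟩ := exists_nat_ge (|a x|)
    refine mem_iUnion.2 ⟨N, ⟨⟨x, hx⟩, ?_, rfl⟩⟩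
    simp only [mem_preimage, restrict_apply, mem_Icc]
    rw [abs_le] at hN; exact hN
  have hpos : ∃ N, 0 < MeasureTheory.volume (T N) := by
    by_contra h
    push_neg at h
    simp only [le_zero_iff] at h
    have : MeasureTheory.volume (Ioo α β) = 0 := by
      apply MeasureTheory.measure_mono_null hTunion
      exact MeasureTheory.measure_iUnion_null h
    rw [Real.volume_Ioo] at this
    have : β - α ≤ 0 := by
      by_contra hc; push_neg at hc
      rw [ENNReal.ofReal_eq_zero] at this; linarith
    linarith
  obtain ⟨N, hN⟩ := hpos
  have hstein : T N - T N ∈ nhds (0:ℝ) :=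
    MeasureTheory.Measure.sub_mem_nhds_zero_of_addHaar_pos MeasureTheory.volume (T N) (hTmeas N) hN
  obtain ⟨ε, hε, hball⟩ := Metric.mem_nhds_iff.1 hstein
  apply additive_linear_of_bounded_near_zero ha (δ := ε) (M := 2*N) hε
  intro x hx
  have hxmem : x ∈ T N - T N := by
    apply hball
    simpa [Real.dist_eq] using hx
  obtain ⟨p, hp, q, hq, hpq⟩ := hxmem
  obtain ⟨⟨p', hp'⟩, hpmem, rfl⟩ := hp
  obtain ⟨⟨q', hq'⟩, hqmem, rfl⟩ := hq
  simp only [mem_preimage, restrict_apply, mem_Icc] at hpmem hqmem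
  have hax : a x = a p' - a q' := by
    have := ha (p' - q') q'
    rw [sub_add_cancel] at this
    have hx' : x = p' - q' := hpq.symm
    rw [hx']; linarith
  rw [hax]
  calc |a p' - a q'| ≤ |a p'| + |a q'| := abs_sub _ _
    _ ≤ 2*N := by
        have h1 : |a p'| ≤ N := abs_le.2 ⟨hpmem.1, hpmem.2⟩
        have h2 : |a q'| ≤ N := abs_le.2 ⟨hqmem.1, hqmem.2⟩
        linarith

end Interval

section Biadditive
variable {B : ℝ → ℝ → ℝ}

lemma biadd_left_zero (hB1 : ∀ u1 u2 v, B (u1+u2) v = B u1 v + B u2 v) (v : ℝ) : B 0 v = 0 := by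
  have := hB1 0 0 v; simp at this; linarith

/-- a biadditive function bounded on an open rectangle is bilinear. -/
lemma biadd_bilinear_of_bounded
    (hB1 : ∀ u1 u2 v, B (u1+u2) v = B u1 v + B u2 v)
    (hB2 : ∀ u v1 v2, B u (v1+v2) = B u v1 + B u v2)
    {α β γ η M : ℝ} (hab : α < β) (hce : γ < η)
    (hM : ∀ u ∈ Ioo α β, ∀ v ∈ Ioo γ η, |B u v| ≤ M) :
    ∀ u v, B u v = B 1 1 * u * v := by
  set u0 := (α+β)/2 with hu0
  set v0 := (γ+η)/2 with hv0
  have hu0m : u0 ∈ Ioo α β := ⟨by rw [hu0]; linarith, by rw [hu0]; linarith⟩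
  have hv0m : v0 ∈ Ioo γ η := ⟨by rw [hv0]; linarith, by rw [hv0]; linarith⟩
  -- slice at v0 : u ↦ B u v0 is additive and bounded on Ioo α β
  have hslice1 : ∀ u, B u v0 = B 1 v0 * u :=
    additive_linear_of_bounded_on_Ioo (fun x y => hB1 x y v0) hab
      (fun u hu => hM u hu v0 hv0m)
  have hslice2 : ∀ v, B u0 v = B u0 1 * v :=
    additive_linear_of_bounded_on_Ioo (hB2 u0) hce (fun v hv => hM u0 hu0m v hv)
  set δ := min ((β-α)/2) ((η-γ)/2) with hδ
  have hδpos : 0 < δ := by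
    apply lt_min <;> linarith
  set K := 2*M + |B u0 1| * δ + |B 1 v0| * δ with hK
  -- B bounded on (-δ,δ)²
  have hbdd : ∀ h k : ℝ, |h| < δ → |k| < δ → |B h k| ≤ K := by
    intro h k hh hk
    have hhu : u0 + h ∈ Ioo α β := by
      rw [abs_lt] at hh
      have h1 : |h| < (β-α)/2 := lt_of_lt_of_le (abs_lt.2 hh) (min_le_left _ _)
      rw [abs_lt] at h1
      constructor <;> (simp only [hu0]; push_cast; linarith [h1.1, h1.2])
    have hkv : v0 + k ∈ Ioo γ η := by
      have h1 : |k| < (η-γ)/2 := lt_of_lt_of_le hk (min_le_right _ _)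
      rw [abs_lt] at h1
      constructor <;> (simp only [hv0]; linarith [h1.1, h1.2])
    have hexp : B (u0+h) (v0+k) = B u0 v0 + B u0 k + B h v0 + B h k := by
      rw [hB1, hB2, hB2]; ring
    have hBk : B h k = B (u0+h) (v0+k) - B u0 v0 - B u0 1 * k - B 1 v0 * h := by
      rw [hexp, hslice2 k, hslice1 h]; ring
    rw [hBk]
    have b1 := hM _ hhu _ hkv
    have b2 := hM _ hu0m _ hv0m
    have b3 : |B u0 1 * k| ≤ |B u0 1| * δ := by
      rw [abs_mul]
      exact mul_le_mul_of_nonneg_left hk.le (abs_nonneg _)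
    have b4 : |B 1 v0 * h| ≤ |B 1 v0| * δ := by
      rw [abs_mul]
      exact mul_le_mul_of_nonneg_left hh.le (abs_nonneg _)
    have := abs_sub (B (u0+h) (v0+k) - B u0 v0 - B u0 1 * k) (B 1 v0 * h)
    have := abs_sub (B (u0+h) (v0+k) - B u0 v0) (B u0 1 * k)
    have := abs_sub (B (u0+h) (v0+k)) (B u0 v0)
    rw [hK]; linarith
  -- for |h| < δ : k ↦ B h k is linear
  have hlin2 : ∀ h, |h| < δ → ∀ k, B h k = B h 1 * k := by
    intro h hh
    apply additive_linear_of_bounded_near_zero (hB2 h) hδpos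
    intro k hk; exact hbdd h k hh hk
  -- for all h k : B h k = B h 1 * k
  have hall2 : ∀ h k, B h k = B h 1 * k := by
    intro h k
    set g : ℝ → ℝ := fun h' => B h' k - B h' 1 * k with hg
    have hgadd : ∀ x y, g (x+y) = g x + g y := by
      intro x y; simp only [hg, hB1]; ring
    have hg0 : ∀ x ∈ Ioo (-δ) δ, g x = 0 := by
      intro x hx
      have : |x| < δ := abs_lt.2 ⟨hx.1, hx.2⟩
      simp only [hg]; rw [hlin2 x this k]; ring
    have := additive_zero_of_zero_on_Ioo hgadd (by linarith) hg0 h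
    simp only [hg] at this; linarith
  -- h ↦ B h 1 is linear
  have hlin1 : ∀ h, B h 1 = B 1 1 * h := by
    apply additive_linear_of_bounded_near_zero (fun x y => hB1 x y 1) hδpos (M := K / (δ/2))
    intro h hh
    have hk : |δ/2| < δ := by rw [abs_of_pos (by linarith)]; linarith
    have := hbdd h (δ/2) hh hk
    rw [hall2 h (δ/2), abs_mul, abs_of_pos (show (0:ℝ) < δ/2 by linarith)] at this
    rw [le_div_iff₀ (by linarith : (0:ℝ) < δ/2)]
    linarith
  intro u v
  rw [hall2 u v, hlin1 u]

/-- a biadditive function measurable-on-slices over an open rectangle is bilinear. -/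
lemma biadd_bilinear_of_measurable
    (hB1 : ∀ u1 u2 v, B (u1+u2) v = B u1 v + B u2 v)
    (hB2 : ∀ u v1 v2, B u (v1+v2) = B u v1 + B u v2)
    {α β γ η u0 : ℝ} (hab : α < β) (hce : γ < η) (hu0 : u0 ∈ Ioo α β) (hu00 : u0 ≠ 0)
    (hmeas1 : ∀ v0 ∈ Ioo γ η, Measurable ((Ioo α β).restrict (fun u => B u v0)))
    (hmeas2 : Measurable ((Ioo γ η).restrict (fun v => B u0 v))) :
    ∀ u v, B u v = B 1 1 * u * v := by
  -- each slice at v0 ∈ (γ,η) is linear in u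
  have hslice : ∀ v0 ∈ Ioo γ η, ∀ u, B u v0 = B 1 v0 * u := fun v0 hv0 =>
    additive_linear_of_measurable_on_Ioo (fun x y => hB1 x y v0) hab (hmeas1 v0 hv0)
  -- e(v) = B 1 v is additive and measurable on (γ,η)
  set e : ℝ → ℝ := fun v => B 1 v with he
  have headd : ∀ x y, e (x+y) = e x + e y := hB2 1
  have hemeas : Measurable ((Ioo γ η).restrict e) := by
    have : (Ioo γ η).restrict e = fun v : Ioo γ η => B u0 (v:ℝ) * u0⁻¹ := by
      funext v
      have := hslice (v:ℝ) v.2 u0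
      show B 1 (v:ℝ) = B u0 (v:ℝ) * u0⁻¹
      rw [this]; field_simp
    rw [this]
    exact hmeas2.mul_const _
  have helin : ∀ v, e v = e 1 * v :=
    additive_linear_of_measurable_on_Ioo headd hce hemeas
  -- conclude for v ∈ (γ,η), then extend
  have hrect : ∀ u, ∀ v ∈ Ioo γ η, B u v = B 1 1 * u * v := by
    intro u v hv
    rw [hslice v hv u]
    have := helin v
    simp only [he] at this
    rw [this]; ring
  intro u v
  set g : ℝ → ℝ := fun v' => B u v' - B 1 1 * u * v' with hg
  have hgadd : ∀ x y, g (x+y) = g x + g y := by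
    intro x y; simp only [hg, hB2]; ring
  have hg0 : ∀ x ∈ Ioo γ η, g x = 0 := by
    intro x hx; simp only [hg]; rw [hrect u x hx]; ring
  have := additive_zero_of_zero_on_Ioo hgadd hce hg0 v
  simp only [hg] at this; linarith

end Biadditive

section Trig

noncomputable def phiOf (d : ℝ → ℝ) (x : ℝ) : ℝ :=
  d (Real.arccos x) + (1 / Real.sqrt (1 - x ^ 2)) * d x

variable {d : ℝ → ℝ}

lemma d_sub (hd : ∀ x y, d (x + y) = d x + d y) (x y : ℝ) : d (x - y) = d x - d y := by
  have := hd (x - y) y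
  rw [sub_add_cancel] at this
  linarith

lemma d_cos_eq (hd : ∀ x y, d (x + y) = d x + d y) {r : ℝ} (h1 : 0 < r) (h2 : r < π) :
    d (Real.cos r) = Real.sin r * (phiOf d (Real.cos r) - d r) := by
  have hsin : 0 < Real.sin r := Real.sin_pos_of_pos_of_lt_pi h1 h2
  have hsq : Real.sqrt (1 - Real.cos r ^ 2) = Real.sin r := by
    rw [show (1 - Real.cos r^2) = Real.sin r^2 by rw [Real.sin_sq]]
    exact Real.sqrt_sq hsin.le
  unfold phiOf
  rw [Real.arccos_cos h1.le h2.le, hsq]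
  field_simp
  ring

lemma key_identity (hd : ∀ x y, d (x + y) = d x + d y) {t s : ℝ}
    (ht : t ∈ Ioo 0 π) (hs : s ∈ Ioo 0 π) (hts : t + s ∈ Ioo 0 π) (hst : t - s ∈ Ioo 0 π) :
    d (Real.cos t * Real.cos s) - Real.cos t * d (Real.cos s) - Real.cos s * d (Real.cos t)
      = (Real.sin (t+s) * phiOf d (Real.cos (t+s)) + Real.sin (t-s) * phiOf d (Real.cos (t-s))) / 2
        - Real.cos t * Real.sin s * phiOf d (Real.cos s)
        - Real.cos s * Real.sin t * phiOf d (Real.cos t) := by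
  have e1 := d_cos_eq hd hts.1 hts.2
  have e2 := d_cos_eq hd hst.1 hst.2
  have e3 := d_cos_eq hd ht.1 ht.2
  have e4 := d_cos_eq hd hs.1 hs.2
  have hdts : d (t + s) = d t + d s := hd t s
  have hdst : d (t - s) = d t - d s := d_sub hd t s
  have eprod : 2 * d (Real.cos t * Real.cos s) = d (Real.cos (t+s)) + d (Real.cos (t-s)) := by
    have h2 : Real.cos (t+s) + Real.cos (t-s) = Real.cos t * Real.cos s + Real.cos t * Real.cos s := by
      rw [Real.cos_add, Real.cos_sub]; ring
    have h3 := hd (Real.cos (t+s)) (Real.cos (t-s))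
    rw [h2, hd] at h3
    linarith
  have hsa : Real.sin (t+s) = Real.sin t * Real.cos s + Real.cos t * Real.sin s := Real.sin_add t s
  have hss : Real.sin (t-s) = Real.sin t * Real.cos s - Real.cos t * Real.sin s := Real.sin_sub t s
  linear_combination eprod/2 + e1/2 + e2/2 - Real.cos t * e4 - Real.cos s * e3
    - Real.sin (t+s)/2 * hdts - Real.sin (t-s)/2 * hdst
    - (d t + d s)/2 * hsa - (d t - d s)/2 * hss

end Trig

section Helpers

lemma cos_mem_Ioo' {r : ℝ} (h1 : 0 < r) (h2 : r < π) : Real.cos r ∈ Ioo (-1:ℝ) 1 := by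
  constructor
  · have := Real.cos_lt_cos_of_nonneg_of_le_pi h1.le le_rfl h2
    rwa [Real.cos_pi] at this
  · have := Real.cos_lt_cos_of_nonneg_of_le_pi le_rfl h2.le h1
    rwa [Real.cos_zero] at this

lemma exists_cos_eq' {a b u : ℝ} (h0 : 0 ≤ a) (hb : b ≤ π) (hab : a ≤ b)
    (hu : u ∈ Ioo (Real.cos b) (Real.cos a)) :
    ∃ t ∈ Ioo a b, Real.cos t = u ∧ Real.arccos u = t := by
  obtain ⟨t, ht, hct⟩ := intermediate_value_Ioo' hab Real.continuous_cos.continuousOn hu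
  refine ⟨t, ht, hct, ?_⟩
  rw [← hct, Real.arccos_cos (by linarith [ht.1]) (by linarith [ht.2])]

lemma cont_to_locbdd {φ : ℝ → ℝ} {s : Set ℝ} (h : ContinuousOn φ s) :
    LocallyBoundedOn φ s := by
  intro x hx
  refine ⟨|φ x| + 1, ?_⟩
  have h1 : Filter.Tendsto (fun y => |φ y|) (nhdsWithin x s) (nhds |φ x|) := (h x hx).abs
  have h2 := h1.eventually_lt_const (show |φ x| < |φ x| + 1 by linarith)
  filter_upwards [h2] with y hy using hy.le

/-- extract a uniform bound for `phiOf d ∘ cos` near a point of `(0,π)`. -/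
lemma loc_bound {d : ℝ → ℝ} (hφ : LocallyBoundedOn (phiOf d) (Ioo (-1) 1))
    {r : ℝ} (h1 : 0 < r) (h2 : r < π) :
    ∃ C η₀ : ℝ, 0 ≤ C ∧ 0 < η₀ ∧ ∀ r', |r' - r| < η₀ → |phiOf d (Real.cos r')| ≤ C := by
  have hmem := cos_mem_Ioo' h1 h2
  obtain ⟨C, hC⟩ := hφ _ hmem
  rw [nhdsWithin_eq_nhds.2 (isOpen_Ioo.mem_nhds hmem)] at hC
  rw [Metric.eventually_nhds_iff] at hC
  obtain ⟨ε, hε, hball⟩ := hC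
  obtain ⟨η₀, hη₀, hcont⟩ := Metric.continuousAt_iff.1 Real.continuous_cos.continuousAt ε hε
  refine ⟨C, η₀, ?_, hη₀, ?_⟩
  · have := hball (show dist (Real.cos r) (Real.cos r) < ε by simpa using hε)
    exact le_trans (abs_nonneg _) this
  · intro r' hr'
    apply hball
    exact hcont (by simpa [Real.dist_eq] using hr')

end Helpers

section BoundedBranch
variable {d : ℝ → ℝ}

lemma bounded_branch (hd : ∀ x y, d (x + y) = d x + d y)
    (hφ : LocallyBoundedOn (phiOf d) (Ioo (-1) 1)) :
    ∃ α β γ η M : ℝ, α < β ∧ γ < η ∧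
      ∀ u ∈ Ioo α β, ∀ v ∈ Ioo γ η, |d (u*v) - u * d v - v * d u| ≤ M := by
  have hπ := Real.pi_pos
  obtain ⟨C1, η1, hC1, hη1, hb1⟩ := loc_bound hφ (r := 17*π/32) (by linarith) (by linarith)
  obtain ⟨C2, η2, hC2, hη2, hb2⟩ := loc_bound hφ (r := 9*π/32) (by linarith) (by linarith)
  obtain ⟨C3, η3, hC3, hη3, hb3⟩ := loc_bound hφ (r := 17*π/32 + 9*π/32) (by linarith) (by linarith)
  obtain ⟨C4, η4, hC4, hη4, hb4⟩ := loc_bound hφ (r := 17*π/32 - 9*π/32) (by linarith) (by linarith)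
  set δ : ℝ := min (min (η1/2) (η2/2)) (min (min (η3/2) (η4/2)) (π/32)) with hδ
  have hδ1 : δ ≤ η1/2 := le_trans (min_le_left _ _) (min_le_left _ _)
  have hδ2 : δ ≤ η2/2 := le_trans (min_le_left _ _) (min_le_right _ _)
  have hδ3 : δ ≤ η3/2 :=
    le_trans (min_le_right _ _) (le_trans (min_le_left _ _) (min_le_left _ _))
  have hδ4 : δ ≤ η4/2 :=
    le_trans (min_le_right _ _) (le_trans (min_le_left _ _) (min_le_right _ _))
  have hδπ : δ ≤ π/32 := le_trans (min_le_right _ _) (min_le_right _ _)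
  have hδpos : 0 < δ := by
    apply lt_min (lt_min (by linarith) (by linarith))
    exact lt_min (lt_min (by linarith) (by linarith)) (by linarith)
  have h0t : 0 ≤ 17*π/32 - δ := by linarith
  have hπt : 17*π/32 + δ ≤ π := by linarith
  have h0s : 0 ≤ 9*π/32 - δ := by linarith
  have hπs : 9*π/32 + δ ≤ π := by linarith
  refine ⟨Real.cos (17*π/32+δ), Real.cos (17*π/32-δ), Real.cos (9*π/32+δ), Real.cos (9*π/32-δ),
    (C3+C4)/2 + C2 + C1, ?_, ?_, ?_⟩
  · exact Real.cos_lt_cos_of_nonneg_of_le_pi h0t hπt (by linarith)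
  · exact Real.cos_lt_cos_of_nonneg_of_le_pi h0s hπs (by linarith)
  intro u hu v hv
  obtain ⟨t, htm, hct, -⟩ := exists_cos_eq' h0t hπt (by linarith) hu
  obtain ⟨s, hsm, hcs, -⟩ := exists_cos_eq' h0s hπs (by linarith) hv
  obtain ⟨htl, htr⟩ := htm
  obtain ⟨hsl, hsr⟩ := hsm
  have key := key_identity hd (t := t) (s := s)
    ⟨by linarith, by linarith⟩ ⟨by linarith, by linarith⟩
    ⟨by linarith, by linarith⟩ ⟨by linarith, by linarith⟩
  rw [← hct, ← hcs, key]
  have p1 : |phiOf d (Real.cos t)| ≤ C1 := hb1 t (by rw [abs_lt]; constructor <;> linarith)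
  have p2 : |phiOf d (Real.cos s)| ≤ C2 := hb2 s (by rw [abs_lt]; constructor <;> linarith)
  have p3 : |phiOf d (Real.cos (t+s))| ≤ C3 :=
    hb3 (t+s) (by rw [abs_lt]; constructor <;> linarith)
  have p4 : |phiOf d (Real.cos (t-s))| ≤ C4 :=
    hb4 (t-s) (by rw [abs_lt]; constructor <;> linarith)
  have q1 : |Real.sin (t+s) * phiOf d (Real.cos (t+s))| ≤ C3 := by
    rw [abs_mul]
    calc |Real.sin (t+s)| * |phiOf d (Real.cos (t+s))| ≤ 1 * C3 :=
          mul_le_mul (Real.abs_sin_le_one _) p3 (abs_nonneg _) (by norm_num)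
      _ = C3 := one_mul _
  have q2 : |Real.sin (t-s) * phiOf d (Real.cos (t-s))| ≤ C4 := by
    rw [abs_mul]
    calc |Real.sin (t-s)| * |phiOf d (Real.cos (t-s))| ≤ 1 * C4 :=
          mul_le_mul (Real.abs_sin_le_one _) p4 (abs_nonneg _) (by norm_num)
      _ = C4 := one_mul _
  have q3 : |Real.cos t * Real.sin s * phiOf d (Real.cos s)| ≤ C2 := by
    rw [abs_mul, abs_mul]
    have h1 : |Real.cos t| * |Real.sin s| ≤ 1 * 1 :=
      mul_le_mul (Real.abs_cos_le_one t) (Real.abs_sin_le_one s) (abs_nonneg _) zero_le_one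
    calc |Real.cos t| * |Real.sin s| * |phiOf d (Real.cos s)| ≤ (1*1) * C2 :=
          mul_le_mul h1 p2 (abs_nonneg _) (by norm_num)
      _ = C2 := by ring
  have q4 : |Real.cos s * Real.sin t * phiOf d (Real.cos t)| ≤ C1 := by
    rw [abs_mul, abs_mul]
    have h1 : |Real.cos s| * |Real.sin t| ≤ 1 * 1 :=
      mul_le_mul (Real.abs_cos_le_one s) (Real.abs_sin_le_one t) (abs_nonneg _) zero_le_one
    calc |Real.cos s| * |Real.sin t| * |phiOf d (Real.cos t)| ≤ (1*1) * C1 :=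
          mul_le_mul h1 p1 (abs_nonneg _) (by norm_num)
      _ = C1 := by ring
  have hA : |(Real.sin (t+s) * phiOf d (Real.cos (t+s))
      + Real.sin (t-s) * phiOf d (Real.cos (t-s)))/2| ≤ (C3+C4)/2 := by
    rw [abs_div, abs_two]
    have := abs_add_le (Real.sin (t+s) * phiOf d (Real.cos (t+s)))
      (Real.sin (t-s) * phiOf d (Real.cos (t-s)))
    linarith
  have habs1 := abs_sub ((Real.sin (t+s) * phiOf d (Real.cos (t+s))
      + Real.sin (t-s) * phiOf d (Real.cos (t-s)))/2
      - Real.cos t * Real.sin s * phiOf d (Real.cos s))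
      (Real.cos s * Real.sin t * phiOf d (Real.cos t))
  have habs2 := abs_sub ((Real.sin (t+s) * phiOf d (Real.cos (t+s))
      + Real.sin (t-s) * phiOf d (Real.cos (t-s)))/2)
      (Real.cos t * Real.sin s * phiOf d (Real.cos s))
  linarith

end BoundedBranch

section MeasBranch
variable {d : ℝ → ℝ}

noncomputable def Psi (φ' : ℝ → ℝ) (u v : ℝ) : ℝ :=
  (Real.sin (Real.arccos u + Real.arccos v) * φ' (Real.cos (Real.arccos u + Real.arccos v))
   + Real.sin (Real.arccos u - Real.arccos v) * φ' (Real.cos (Real.arccos u - Real.arccos v)))/2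
  - u * Real.sin (Real.arccos v) * φ' v - v * Real.sin (Real.arccos u) * φ' u

lemma psi_meas_left {φ' : ℝ → ℝ} (hφ' : Measurable φ') (v0 : ℝ) :
    Measurable (fun u => Psi φ' u v0) := by
  unfold Psi
  have harc : Measurable Real.arccos := Real.measurable_arccos
  have hc : Measurable Real.cos := Real.continuous_cos.measurable
  have hs : Measurable Real.sin := Real.continuous_sin.measurable
  have h1 : Measurable (fun u => Real.arccos u + Real.arccos v0) := harc.add_const _
  have h2 : Measurable (fun u => Real.arccos u - Real.arccos v0) := harc.sub_const _
  apply Measurable.sub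
  apply Measurable.sub
  · exact (((hs.comp h1).mul (hφ'.comp (hc.comp h1))).add
      ((hs.comp h2).mul (hφ'.comp (hc.comp h2)))).div_const 2
  · exact (measurable_id.mul_const _).mul_const _
  · exact (measurable_const.mul (hs.comp harc)).mul hφ'

lemma psi_meas_right {φ' : ℝ → ℝ} (hφ' : Measurable φ') (u0 : ℝ) :
    Measurable (fun v => Psi φ' u0 v) := by
  unfold Psi
  have harc : Measurable Real.arccos := Real.measurable_arccos
  have hc : Measurable Real.cos := Real.continuous_cos.measurable
  have hs : Measurable Real.sin := Real.continuous_sin.measurable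
  have h1 : Measurable (fun v => Real.arccos u0 + Real.arccos v) := harc.const_add _
  have h2 : Measurable (fun v => Real.arccos u0 - Real.arccos v) := harc.const_sub _
  apply Measurable.sub
  apply Measurable.sub
  · exact (((hs.comp h1).mul (hφ'.comp (hc.comp h1))).add
      ((hs.comp h2).mul (hφ'.comp (hc.comp h2)))).div_const 2
  · exact (measurable_const.mul (hs.comp harc)).mul hφ'
  · exact (measurable_id.mul_const _).mul_const _

lemma B_eq_psi (hd : ∀ x y, d (x + y) = d x + d y) {φ' : ℝ → ℝ}
    (hφ'eq : ∀ x ∈ Ioo (-1:ℝ) 1, φ' x = phiOf d x) :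
    ∀ u ∈ Ioo (Real.cos (9*π/16)) (Real.cos (π/2)),
    ∀ v ∈ Ioo (Real.cos (5*π/16)) (Real.cos (π/4)),
      d (u*v) - u * d v - v * d u = Psi φ' u v := by
  have hπ := Real.pi_pos
  intro u hu v hv
  obtain ⟨t, htm, hct, hat⟩ := exists_cos_eq' (a := π/2) (b := 9*π/16)
    (by linarith) (by linarith) (by linarith) hu
  obtain ⟨s, hsm, hcs, has⟩ := exists_cos_eq' (a := π/4) (b := 5*π/16)
    (by linarith) (by linarith) (by linarith) hv
  obtain ⟨htl, htr⟩ := htm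
  obtain ⟨hsl, hsr⟩ := hsm
  have htIoo : 0 < t ∧ t < π := ⟨by linarith, by linarith⟩
  have hsIoo : 0 < s ∧ s < π := ⟨by linarith, by linarith⟩
  have htsIoo : 0 < t + s ∧ t + s < π := ⟨by linarith, by linarith⟩
  have hstIoo : 0 < t - s ∧ t - s < π := ⟨by linarith, by linarith⟩
  have key := key_identity hd (t := t) (s := s)
    ⟨htIoo.1, htIoo.2⟩ ⟨hsIoo.1, hsIoo.2⟩ ⟨htsIoo.1, htsIoo.2⟩ ⟨hstIoo.1, hstIoo.2⟩
  unfold Psi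
  rw [hat, has, ← hct, ← hcs, key]
  rw [hφ'eq _ (cos_mem_Ioo' htsIoo.1 htsIoo.2), hφ'eq _ (cos_mem_Ioo' hstIoo.1 hstIoo.2),
    hφ'eq _ (cos_mem_Ioo' hsIoo.1 hsIoo.2), hφ'eq _ (cos_mem_Ioo' htIoo.1 htIoo.2)]

end MeasBranch

theorem stmt_8 (d : ℝ → ℝ)
    (hd : ∀ x y : ℝ, d (x + y) = d x + d y)
    (hreg : RegularOn
      (fun x : ℝ => d (Real.arccos x) + (1 / Real.sqrt (1 - x ^ 2)) * d x)
      (Set.Ioo (-1) 1)) :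
    ∃ χ : ℝ → ℝ, IsRealDerivation χ ∧ ∀ x : ℝ, d x = χ x + d 1 * x := by
  have hπ := Real.pi_pos
  have hB1 : ∀ u1 u2 v : ℝ, d ((u1+u2)*v) - (u1+u2) * d v - v * d (u1+u2)
      = (d (u1*v) - u1 * d v - v * d u1) + (d (u2*v) - u2 * d v - v * d u2) := by
    intro u1 u2 v
    rw [show (u1+u2)*v = u1*v + u2*v by ring, hd, hd]
    ring
  have hB2 : ∀ u v1 v2 : ℝ, d (u*(v1+v2)) - u * d (v1+v2) - (v1+v2) * d u
      = (d (u*v1) - u * d v1 - v1 * d u) + (d (u*v2) - u * d v2 - v2 * d u) := by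
    intro u v1 v2
    rw [show u*(v1+v2) = u*v1 + u*v2 by ring, hd, hd]
    ring
  have hreg' : RegularOn (phiOf d) (Ioo (-1) 1) := hreg
  have hball : ∀ u v : ℝ, d (u*v) - u * d v - v * d u
      = (d (1*1) - 1 * d 1 - 1 * d 1) * u * v := by
    have hloc_case : LocallyBoundedOn (phiOf d) (Ioo (-1) 1) →
        ∀ u v : ℝ, d (u*v) - u * d v - v * d u = (d (1*1) - 1 * d 1 - 1 * d 1) * u * v := by
      intro hloc
      obtain ⟨α, β, γ, η, M, hab, hce, hM⟩ := bounded_branch hd hloc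
      exact biadd_bilinear_of_bounded (B := fun u v => d (u*v) - u * d v - v * d u)
        hB1 hB2 hab hce hM
    rcases hreg' with hloc | hcont | hmeas
    · exact hloc_case hloc
    · exact hloc_case (cont_to_locbdd hcont)
    · obtain ⟨φ', hφ'm, hφ'e⟩ :=
        (MeasurableEmbedding.subtype_coe
          (measurableSet_Ioo (a := (-1:ℝ)) (b := 1))).exists_measurable_extend hmeas
          (fun _ => ⟨0⟩)
      have hφ'eq : ∀ x ∈ Ioo (-1:ℝ) 1, φ' x = phiOf d x := fun x hx => congrFun hφ'e ⟨x, hx⟩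
      have hBe := B_eq_psi hd hφ'eq
      have hab : Real.cos (9*π/16) < Real.cos (π/2) :=
        Real.cos_lt_cos_of_nonneg_of_le_pi (by linarith) (by linarith) (by linarith)
      have hce : Real.cos (5*π/16) < Real.cos (π/4) :=
        Real.cos_lt_cos_of_nonneg_of_le_pi (by linarith) (by linarith) (by linarith)
      have hu0 : Real.cos (17*π/32) ∈ Ioo (Real.cos (9*π/16)) (Real.cos (π/2)) :=
        ⟨Real.cos_lt_cos_of_nonneg_of_le_pi (by linarith) (by linarith) (by linarith),
         Real.cos_lt_cos_of_nonneg_of_le_pi (by linarith) (by linarith) (by linarith)⟩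
      have hu00 : Real.cos (17*π/32) ≠ 0 := by
        have h2 := hu0.2
        rw [Real.cos_pi_div_two] at h2
        exact ne_of_lt h2
      apply biadd_bilinear_of_measurable (B := fun u v => d (u*v) - u * d v - v * d u)
        hB1 hB2 hab hce hu0 hu00
      · intro v0 hv0
        have heq : (Ioo (Real.cos (9*π/16)) (Real.cos (π/2))).restrict
            (fun u => d (u*v0) - u * d v0 - v0 * d u)
            = (Ioo (Real.cos (9*π/16)) (Real.cos (π/2))).restrict (fun u => Psi φ' u v0) := by
          funext x
          simp only [Set.restrict]
          exact hBe x x.2 v0 hv0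
        rw [heq]
        exact (psi_meas_left hφ'm v0).comp measurable_subtype_coe
      · have heq : (Ioo (Real.cos (5*π/16)) (Real.cos (π/4))).restrict
            (fun v => d (Real.cos (17*π/32)*v) - Real.cos (17*π/32) * d v - v * d (Real.cos (17*π/32)))
            = (Ioo (Real.cos (5*π/16)) (Real.cos (π/4))).restrict
              (fun v => Psi φ' (Real.cos (17*π/32)) v) := by
          funext x
          simp only [Set.restrict]
          exact hBe _ hu0 x x.2
        rw [heq]
        exact (psi_meas_right hφ'm _).comp measurable_subtype_coe
  refine ⟨fun x => d x - d 1 * x, ⟨?_, ?_⟩, ?_⟩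
  · intro x y
    show d (x+y) - d 1 * (x+y) = (d x - d 1 * x) + (d y - d 1 * y)
    rw [hd]; ring
  · intro x y
    show d (x*y) - d 1 * (x*y) = x * (d y - d 1 * y) + y * (d x - d 1 * x)
    have h := hball x y
    have h11 : d ((1:ℝ)*1) = d 1 := by norm_num
    rw [h11] at h
    linear_combination h
  · intro x
    show d x = (d x - d 1 * x) + d 1 * x
    ring
end
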